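/- Let q be a self-join-free Boolean conjunctive query, x a variable of q, and a a constant. If the attack graph of q is acyclic, then the attack graph of q[x→a] (the query obtained by substituting a for all occurrences of x) is acyclic. -/

import Mathlib

/-- A fact `R(a₁,…,aₙ)`: relation name, primary-key values, non-key values. -/
structure DBFact where
  rel : ℕ
  key : List ℕ
  rest : List ℕ
deriving DecidableEq

/-- Two facts are key-equal if they have the same relation name and primary-key value. -/
def keyEq (A B : DBFact) : Prop := A.rel = B.rel ∧ A.key = B.key

instance (A B : DBFact) : Decidable (keyEq A B) :=
  inferInstanceAs (Decidable (_ ∧ _))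

/-- A set of facts is consistent if it contains no two distinct key-equal facts. -/
def Consistent (s : Finset DBFact) : Prop := ∀ A ∈ s, ∀ B ∈ s, keyEq A B → A = B

/-- A repair of `db` is a maximal (w.r.t. ⊆) consistent subset of `db`. -/
def Repair (db r : Finset DBFact) : Prop :=
  r ⊆ db ∧ Consistent r ∧ ∀ r', r' ⊆ db → Consistent r' → r ⊆ r' → r = r'

/-- A term is a variable (inl) or a constant (inr). -/
abbrev Term := ℕ ⊕ ℕ

/-- An atom `R(t₁,…,tₙ)` with key positions and non-key positions. -/
structure Atom where
  rel : ℕ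
  key : List Term
  rest : List Term
deriving DecidableEq

def termVars (l : List Term) : Finset ℕ := (l.filterMap fun t => t.getLeft?).toFinset

/-- Variables at primary-key positions of an atom. -/
def keyVars (F : Atom) : Finset ℕ := termVars F.key

/-- All variables of an atom. -/
def atomVars (F : Atom) : Finset ℕ := termVars F.key ∪ termVars F.rest

/-- A query (finite set of atoms) is self-join-free: no relation name occurs twice. -/
def SJF (q : Finset Atom) : Prop := ∀ F ∈ q, ∀ G ∈ q, F.rel = G.rel → F = G

/-- Apply a valuation (total map from variables to constants) to an atom, yielding a fact. -/
def applyVal (θ : ℕ → ℕ) (F : Atom) : DBFact :=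
  ⟨F.rel, F.key.map (Sum.elim θ id), F.rest.map (Sum.elim θ id)⟩

/-- Semantic implication of a functional dependency `X → Y` by a set of FDs
(two-tuple semantics, which is equivalent to the standard one for FDs). -/
def FDImplies (fds : Set (Set ℕ × Set ℕ)) (X Y : Set ℕ) : Prop :=
  ∀ θ μ : ℕ → ℕ,
    (∀ p ∈ fds, (∀ v ∈ p.1, θ v = μ v) → ∀ v ∈ p.2, θ v = μ v) →
    (∀ v ∈ X, θ v = μ v) → ∀ v ∈ Y, θ v = μ v

/-- `FD(q) = { key(F) → vars(F) : F ∈ q }`. -/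
def FDs (q : Finset Atom) : Set (Set ℕ × Set ℕ) :=
  {p | ∃ F ∈ q, p = ((keyVars F : Set ℕ), (atomVars F : Set ℕ))}

/-- `F⁺ = { x : FD(q \ {F}) ⊨ key(F) → x }`. -/
def plus (q : Finset Atom) (F : Atom) : Set ℕ :=
  {x | FDImplies (FDs (q.erase F)) (keyVars F : Set ℕ) {x}}

/-- One step of a witness for an attack by `F`: consecutive atoms share a variable outside `F⁺`. -/
def AttackStep (q : Finset Atom) (F : Atom) (A B : Atom) : Prop :=
  ¬ ((atomVars A ∩ atomVars B : Finset ℕ) : Set ℕ) ⊆ plus q F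

/-- `F` attacks `G` in the attack graph of `q`. -/
def Attacks (q : Finset Atom) (F G : Atom) : Prop :=
  F ≠ G ∧ F ∈ q ∧ ∃ L : List Atom, (∀ A ∈ L, A ∈ q) ∧
    List.Chain (AttackStep q F) F L ∧ (F :: L).getLast (List.cons_ne_nil F L) = G

/-- `F` attacks the variable `z`. -/
def AttacksVar (q : Finset Atom) (F : Atom) (z : ℕ) : Prop :=
  z ∉ plus q F ∧ F ∈ q ∧ ∃ L : List Atom, (∀ A ∈ L, A ∈ q) ∧
    List.Chain (AttackStep q F) F L ∧ z ∈ atomVars ((F :: L).getLast (List.cons_ne_nil F L))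

/-- `r ⊨ ζ(q)` for a valuation `ζ` over the variable set `X`. -/
def Sat (r : Finset DBFact) (q : Finset Atom) (X : Finset ℕ) (ζ : ℕ → ℕ) : Prop :=
  ∃ θ : ℕ → ℕ, (∀ v ∈ X, θ v = ζ v) ∧ ∀ F ∈ q, applyVal θ F ∈ r

/-- `r ⊨ q`. -/
def Sat0 (r : Finset DBFact) (q : Finset Atom) : Prop :=
  ∃ θ : ℕ → ℕ, ∀ F ∈ q, applyVal θ F ∈ r

/-- A fact `A` is relevant for `q` in `r` if `A ∈ θ(q) ⊆ r` for some valuation `θ`. -/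
def Relevant (A : DBFact) (q : Finset Atom) (r : Finset DBFact) : Prop :=
  ∃ θ : ℕ → ℕ, (∃ F ∈ q, applyVal θ F = A) ∧ ∀ F ∈ q, applyVal θ F ∈ r

/-- Substitute the constant `a` for the variable `x` in a term. -/
def substTerm (x a : ℕ) (t : Term) : Term :=
  if t = Sum.inl x then Sum.inr a else t

/-- Substitute the constant `a` for the variable `x` in an atom. -/
def substAtom (x a : ℕ) (F : Atom) : Atom :=
  ⟨F.rel, F.key.map (substTerm x a), F.rest.map (substTerm x a)⟩

/- ===== auxiliary lemmas ===== -/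

lemma mem_termVars {l : List Term} {v : ℕ} : v ∈ termVars l ↔ Sum.inl v ∈ l := by
  simp only [termVars, List.mem_toFinset, List.mem_filterMap]
  constructor
  · rintro ⟨t, ht, hgl⟩
    cases t with
    | inl u => simp [Sum.getLeft?] at hgl; subst hgl; exact ht
    | inr u => simp [Sum.getLeft?] at hgl
  · intro hv; exact ⟨Sum.inl v, hv, rfl⟩

lemma termVars_map_subst {x a : ℕ} {l : List Term} :
    termVars (l.map (substTerm x a)) = (termVars l).erase x := by
  ext v
  simp only [Finset.mem_erase, mem_termVars, List.mem_map]
  constructor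
  · rintro ⟨t, ht, hst⟩
    unfold substTerm at hst
    split at hst
    · exact absurd hst (by simp)
    · subst hst
      refine ⟨?_, ht⟩
      rintro rfl
      simp_all
  · rintro ⟨hne, hv⟩
    refine ⟨Sum.inl v, hv, ?_⟩
    unfold substTerm
    simp [hne]

lemma keyVars_subst (x a : ℕ) (F : Atom) :
    keyVars (substAtom x a F) = (keyVars F).erase x := by
  simp [keyVars, substAtom, termVars_map_subst]

lemma atomVars_subst (x a : ℕ) (F : Atom) :
    atomVars (substAtom x a F) = (atomVars F).erase x := by
  simp [atomVars, substAtom, termVars_map_subst, Finset.erase_union_distrib]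

lemma subst_inj_on (q : Finset Atom) (hq : SJF q) (x a : ℕ) {F G : Atom}
    (hF : F ∈ q) (hG : G ∈ q) (hFG : substAtom x a F = substAtom x a G) : F = G := by
  apply hq F hF G hG
  have : (substAtom x a F).rel = (substAtom x a G).rel := by rw [hFG]
  simpa [substAtom] using this

/-- Key lemma: `plus q F` without `x` is contained in the plus of the substituted atom. -/
lemma plus_subst (q : Finset Atom) (hq : SJF q) (x a : ℕ) {F : Atom} (hF : F ∈ q)
    {v : ℕ} (hvx : v ≠ x) (hv : v ∈ plus q F) :
    v ∈ plus (q.image (substAtom x a)) (substAtom x a F) := by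
  intro θ μ hfd hkey w hw
  rw [Set.mem_singleton_iff] at hw; subst hw
  set θ' : ℕ → ℕ := Function.update θ x (μ x) with hθ'
  have hθ'x : θ' x = μ x := Function.update_self _ _ _
  have hθ'ne : ∀ u, u ≠ x → θ' u = θ u := fun u hu => Function.update_of_ne hu _ _
  have key' : ∀ u ∈ (keyVars F : Set ℕ), θ' u = μ u := by
    intro u hu
    by_cases hux : u = x
    · subst hux; exact hθ'x
    · rw [hθ'ne u hux]
      apply hkey
      rw [keyVars_subst]
      exact Finset.mem_coe.2 (Finset.mem_erase.2 ⟨hux, hu⟩)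
  have fd' : ∀ p ∈ FDs (q.erase F), (∀ u ∈ p.1, θ' u = μ u) → ∀ u ∈ p.2, θ' u = μ u := by
    rintro p hp hp1 u hu
    obtain ⟨H, hHq, rfl⟩ := hp
    rw [Finset.mem_erase] at hHq
    obtain ⟨hHF, hHq⟩ := hHq
    -- the substituted atom is in the erased image
    have hmem : substAtom x a H ∈ (q.image (substAtom x a)).erase (substAtom x a F) := by
      refine Finset.mem_erase.2 ⟨?_, Finset.mem_image_of_mem _ hHq⟩
      intro heq
      exact hHF (subst_inj_on q hq x a hHq hF heq)
    have hfdH := hfd ((keyVars (substAtom x a H) : Set ℕ), (atomVars (substAtom x a H) : Set ℕ))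
      ⟨substAtom x a H, hmem, rfl⟩
    have hkeyH : ∀ u ∈ (keyVars (substAtom x a H) : Set ℕ), θ u = μ u := by
      intro u hu
      rw [keyVars_subst] at hu
      have hux : u ≠ x := (Finset.mem_erase.1 (Finset.mem_coe.1 hu)).1
      rw [← hθ'ne u hux]
      exact hp1 u (Finset.mem_erase.1 (Finset.mem_coe.1 hu)).2
    have hall := hfdH hkeyH
    by_cases hux : u = x
    · subst hux; exact hθ'x
    · rw [hθ'ne u hux]
      apply hall
      rw [atomVars_subst]
      exact Finset.mem_coe.2 (Finset.mem_erase.2 ⟨hux, hu⟩)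
  have := hv θ' μ fd' key' w (Set.mem_singleton w)
  rw [hθ'ne w hvx] at this
  exact this

lemma attackStep_subst (q : Finset Atom) (hq : SJF q) (x a : ℕ) {F A B : Atom} (hF : F ∈ q)
    (h : AttackStep (q.image (substAtom x a)) (substAtom x a F) (substAtom x a A) (substAtom x a B)) :
    AttackStep q F A B := by
  intro hsub
  apply h
  intro v hv
  rw [Finset.coe_inter, Set.mem_inter_iff, atomVars_subst, atomVars_subst] at hv
  obtain ⟨hvA, hvB⟩ := hv
  have hvA' := Finset.mem_erase.1 (Finset.mem_coe.1 hvA)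
  have hvB' := Finset.mem_erase.1 (Finset.mem_coe.1 hvB)
  exact plus_subst q hq x a hF hvA'.1
    (hsub (by rw [Finset.coe_inter]; exact ⟨Finset.mem_coe.2 hvA'.2, Finset.mem_coe.2 hvB'.2⟩))

lemma attacks_subst (q : Finset Atom) (hq : SJF q) (x a : ℕ) {F G : Atom}
    (hF : F ∈ q) (hG : G ∈ q)
    (h : Attacks (q.image (substAtom x a)) (substAtom x a F) (substAtom x a G)) :
    Attacks q F G := by
  obtain ⟨hne, _, L', hL'q, hchain, hlast⟩ := h
  -- choose preimages
  classical
  set σ := substAtom x a with hσ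
  set τ : Atom → Atom := fun A' => if h : ∃ B ∈ q, σ B = A' then h.choose else A' with hτ
  have hτ_spec : ∀ A' ∈ q.image σ, τ A' ∈ q ∧ σ (τ A') = A' := by
    intro A' hA'
    obtain ⟨B, hB, rfl⟩ := Finset.mem_image.1 hA'
    have hex : ∃ B' ∈ q, σ B' = σ B := ⟨B, hB, rfl⟩
    simp only [hτ, dif_pos hex]
    exact ⟨hex.choose_spec.1, hex.choose_spec.2⟩
  set L : List Atom := L'.map τ with hL
  have hLq : ∀ A ∈ L, A ∈ q := by
    intro A hA
    obtain ⟨A', hA', rfl⟩ := List.mem_map.1 hA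
    exact (hτ_spec A' (hL'q A' hA')).1
  have hLmap : L.map σ = L' := by
    rw [hL, List.map_map]
    conv_rhs => rw [← List.map_id L']
    apply List.map_congr_left
    intro A' hA'
    exact (hτ_spec A' (hL'q A' hA')).2
  refine ⟨fun hFG => hne (by rw [hFG]), hF, L, hLq, ?_, ?_⟩
  · have : List.Chain (AttackStep (q.image σ) (σ F)) (σ F) (L.map σ) := by
      rw [hLmap]; exact hchain
    replace this : List.IsChain _ (σ F :: L.map σ) := this
    rw [List.isChain_cons_map] at this
    refine List.IsChain.imp ?_ this
    intro A B hAB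
    exact attackStep_subst q hq x a hF hAB
  · -- last element
    have h1 : σ ((F :: L).getLast (List.cons_ne_nil F L)) = σ G := by
      have h2 : ((F :: L).map σ).getLast (by simp) = σ ((F :: L).getLast (List.cons_ne_nil F L)) :=
        List.getLast_map (f := σ) (l := F :: L) (by simp)
      rw [← h2]
      rw [← hlast]
      simp only [List.map_cons, hLmap]
    have hlastq : (F :: L).getLast (List.cons_ne_nil F L) ∈ q := by
      have := List.getLast_mem (l := F :: L) (List.cons_ne_nil F L)
      rcases List.mem_cons.1 this with h | h
      · rw [h]; exact hF
      · exact hLq _ h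
    exact subst_inj_on q hq x a hlastq hG h1

/-- If the attack graph of `q` is acyclic, then the attack graph of `q[x→a]` is acyclic. -/
theorem subst_preserves_acyclicity (q : Finset Atom) (hq : SJF q) (x a : ℕ)
    (h : ∀ F, ¬ Relation.TransGen (Attacks q) F F) :
    ∀ F, ¬ Relation.TransGen (Attacks (q.image (substAtom x a))) F F := by
  classical
  intro F' hcyc
  set σ := substAtom x a with hσ
  set τ : Atom → Atom := fun A' => if h : ∃ B ∈ q, σ B = A' then h.choose else A' with hτ
  have hτ_spec : ∀ A' ∈ q.image σ, τ A' ∈ q ∧ σ (τ A') = A' := by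
    intro A' hA'
    obtain ⟨B, hB, rfl⟩ := Finset.mem_image.1 hA'
    have hex : ∃ B' ∈ q, σ B' = σ B := ⟨B, hB, rfl⟩
    simp only [hτ, dif_pos hex]
    exact ⟨hex.choose_spec.1, hex.choose_spec.2⟩
  have key : ∀ A' B', Attacks (q.image σ) A' B' → Attacks q (τ A') (τ B') := by
    intro A' B' hAB
    obtain ⟨hne, hA'mem, L', hL'q, hchain, hlast⟩ := hAB
    have hB'mem : B' ∈ q.image σ := by
      rw [← hlast]
      have := List.getLast_mem (l := A' :: L') (List.cons_ne_nil A' L')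
      rcases List.mem_cons.1 this with h2 | h2
      · rw [h2]; exact hA'mem
      · exact hL'q _ h2
    obtain ⟨hAq, hAσ⟩ := hτ_spec A' hA'mem
    obtain ⟨hBq, hBσ⟩ := hτ_spec B' hB'mem
    apply attacks_subst q hq x a hAq hBq
    show Attacks (Finset.image σ q) (σ (τ A')) (σ (τ B'))
    rw [hAσ, hBσ]
    exact ⟨hne, hA'mem, L', hL'q, hchain, hlast⟩
  exact h (τ F') (Relation.TransGen.lift τ key F' F' hcyc)
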